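/- For every z in the open first quadrant with |z| > 1, F(z) = (i−1)/2 + (2/π)·Σ_{n=0}^∞ 1/((4n+1)·z^(4n+1)), where F(z) := (1/(2π))·(Log((1+z)/(1−z)) + i·Log((1+iz)/(1−iz))); in particular the series converges for such z. -/

import Mathlib

open Complex

/-- `F(z) = (1/(2π))·(Log((1+z)/(1−z)) + i·Log((1+iz)/(1−iz)))`. -/
noncomputable def F (z : ℂ) : ℂ :=
  (1 / (2 * (Real.pi : ℂ))) *
    (Complex.log ((1 + z) / (1 - z)) + Complex.I * Complex.log ((1 + Complex.I * z) / (1 - Complex.I * z)))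

private lemma log_aux {v : ℂ} (hv : v.im < 0) :
    Complex.log (-((1 + v) / (1 - v))) =
      Complex.log (1 + v) - Complex.log (1 - v) + Real.pi * I := by
  have h1 : (1 + v) ≠ 0 := by
    intro h
    have := congrArg Complex.im h
    simp at this; linarith
  have h2 : (1 - v) ≠ 0 := by
    intro h
    have := congrArg Complex.im h
    simp at this; linarith
  have ha1 : (1 + v).arg < 0 := arg_neg_iff.mpr (by simpa using hv)
  have ha2 : 0 < (1 - v).arg := by
    rcases (arg_nonneg_iff.mpr (by simp; linarith : (0:ℝ) ≤ (1 - v).im)).lt_or_eq with h | h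
    · exact h
    · exfalso
      have := arg_eq_zero_iff.mp h.symm
      simp at this; linarith
  have ha1' : -Real.pi < (1 + v).arg := neg_pi_lt_arg _
  have ha2' : (1 - v).arg ≤ Real.pi := arg_le_pi _
  have hexp : -((1 + v) / (1 - v)) =
      Complex.exp (Complex.log (1 + v) - Complex.log (1 - v) + Real.pi * I) := by
    rw [Complex.exp_add, Complex.exp_sub, Complex.exp_log h1, Complex.exp_log h2,
      Complex.exp_pi_mul_I]
    ring
  have him : (Complex.log (1 + v) - Complex.log (1 - v) + Real.pi * I).im =
      (1 + v).arg - (1 - v).arg + Real.pi := by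
    simp [Complex.add_im, Complex.sub_im, Complex.log_im, Complex.mul_im]
  rw [hexp, Complex.log_exp (by rw [him]; linarith) (by rw [him]; linarith)]

/-- For `z` in the open first quadrant with `|z| > 1`,
`F(z) = (i−1)/2 + (2/π)·Σ_{n=0}^∞ 1/((4n+1)·z^(4n+1))`, the series converging. -/
theorem F_hasSum_of_first_quadrant_norm_gt_one (z : ℂ)
    (hre : 0 < z.re) (him : 0 < z.im) (hz : 1 < ‖z‖) :
    HasSum (fun n : ℕ => (2 / (Real.pi : ℂ)) * (1 / (((4 * n + 1 : ℕ) : ℂ) * z ^ (4 * n + 1))))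
      (F z - (Complex.I - 1) / 2) := by
  have hzne : z ≠ 0 := by
    intro h; rw [h] at hz; simp at hz; linarith [hz]
  have hnz : (1:ℝ) < ‖z‖ := by simpa using hz
  set w : ℂ := z⁻¹ with hwdef
  have hwnorm : ‖w‖ < 1 := by
    rw [hwdef, norm_inv]
    exact inv_lt_one_of_one_lt₀ hnz
  have hIwnorm : ‖I * w‖ < 1 := by
    rwa [norm_mul, Complex.norm_I, one_mul]
  have hnsq : 0 < Complex.normSq z := Complex.normSq_pos.mpr hzne
  have hwim : w.im < 0 := by
    rw [hwdef, Complex.inv_im]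
    exact div_neg_of_neg_of_pos (by linarith) hnsq
  have hwre : 0 < w.re := by
    rw [hwdef, Complex.inv_re]
    exact div_pos hre hnsq
  have hvim : (-(I * w)).im < 0 := by
    simp [Complex.mul_im]
    linarith
  -- the four Taylor series
  have h1 := Complex.hasSum_taylorSeries_neg_log hwnorm
  have h2 := Complex.hasSum_taylorSeries_log hwnorm
  have h3 := Complex.hasSum_taylorSeries_neg_log hIwnorm
  have h4 := Complex.hasSum_taylorSeries_log hIwnorm
  have hS := (h2.add h1).add (((h3.add h4)).neg.mul_left I)
  set S : ℂ := (Complex.log (1 + w) + -Complex.log (1 - w)) +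
      I * -(-Complex.log (1 - I * w) + Complex.log (1 + I * w)) with hSdef
  set g : ℕ → ℂ := fun n => if n % 4 = 1 then 4 * w ^ n / n else 0 with hgdef
  have hI4 : (I : ℂ) ^ 4 = 1 := by
    norm_num [pow_succ, Complex.I_mul_I]
  have hg : HasSum g S := by
    refine hS.congr_fun fun n => ?_
    obtain ⟨q, r, hr4, rfl⟩ : ∃ q r, r < 4 ∧ n = 4 * q + r :=
      ⟨n / 4, n % 4, Nat.mod_lt _ (by norm_num), by omega⟩
    have hIpow : (I : ℂ) ^ (4 * q + r) = I ^ r := by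
      rw [pow_add, pow_mul, hI4, one_pow, one_mul]
    have hnegpow : ((-1 : ℂ)) ^ (4 * q + r + 1) = (-1) ^ (r + 1) := by
      rw [show 4 * q + r + 1 = 4 * q + (r + 1) by omega, pow_add, pow_mul]
      norm_num
    have hmod : (4 * q + r) % 4 = r := by omega
    simp only [hgdef, hmod, mul_pow, hIpow, hnegpow]
    interval_cases r
    · norm_num
      ring
    · norm_num
      linear_combination (2 * w ^ (4 * q + 1) / (4 * (q : ℂ) + 1)) * Complex.I_mul_I
    · norm_num
      ring
    · norm_num [pow_succ, Complex.I_sq]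
      linear_combination (-(2 * w ^ (4 * q + 3) / (4 * (q : ℂ) + 3))) * Complex.I_mul_I
  have hinj : Function.Injective (fun m : ℕ => 4 * m + 1) := fun a b h => by
    simpa using h
  have hvan : ∀ x ∉ Set.range (fun m : ℕ => 4 * m + 1), g x = 0 := by
    intro x hx
    rw [hgdef]
    simp only
    rw [if_neg]
    intro h
    exact hx ⟨x / 4, show 4 * (x / 4) + 1 = x by omega⟩
  have hg2 : HasSum (g ∘ fun m : ℕ => 4 * m + 1) S := (hinj.hasSum_iff hvan).mpr hg
  have hfinal := hg2.mul_left (1 / (2 * (Real.pi : ℂ)))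
  have hπ : (Real.pi : ℂ) ≠ 0 := Complex.ofReal_ne_zero.mpr Real.pi_ne_zero
  -- log identities
  have h1z : (1 : ℂ) - z ≠ 0 := by
    intro h
    have : z = 1 := by linear_combination -h
    rw [this] at him; simp at him
  have h1w : (1 : ℂ) - w ≠ 0 := by
    intro h
    have : w = 1 := by linear_combination -h
    rw [this] at hwim; simp at hwim
  have h1Iz : (1 : ℂ) - I * z ≠ 0 := by
    intro h
    have : I * z = 1 := by linear_combination -h
    have := congrArg Complex.im this
    simp [Complex.mul_im] at this
    linarith
  have h1Iw : (1 : ℂ) - -(I * w) ≠ 0 := by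
    intro h
    have : I * w = -1 := by linear_combination h
    have := congrArg Complex.re this
    simp [Complex.mul_re] at this
    linarith
  have e1 : (1 + z) / (1 - z) = -((1 + w) / (1 - w)) := by
    rw [hwdef] at h1w ⊢
    rw [← neg_div, div_eq_div_iff h1z h1w]
    field_simp
    ring
  have e2 : (1 + I * z) / (1 - I * z) = -((1 + -(I * w)) / (1 - -(I * w))) := by
    rw [hwdef] at h1Iw ⊢
    rw [← neg_div, div_eq_div_iff h1Iz h1Iw]
    field_simp
    linear_combination (2 * z) * Complex.I_mul_I
  have hlog1 : Complex.log ((1 + z) / (1 - z)) =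
      Complex.log (1 + w) - Complex.log (1 - w) + Real.pi * I := by
    rw [e1]; exact log_aux hwim
  have hlog2 : Complex.log ((1 + I * z) / (1 - I * z)) =
      Complex.log (1 - I * w) - Complex.log (1 + I * w) + Real.pi * I := by
    rw [e2, log_aux hvim]
    ring_nf
  -- finish
  convert hfinal using 1
  · rfl
  · funext n
    have hm : (4 * n + 1) % 4 = 1 := by omega
    simp only [Function.comp, hgdef, hm, if_pos, hwdef, inv_pow]
    have hzp : z ^ (4 * n + 1) ≠ 0 := pow_ne_zero _ hzne
    have hd : ((4 * n + 1 : ℕ) : ℂ) ≠ 0 := Nat.cast_ne_zero.mpr (by omega)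
    obtain ⟨d, hdd, hd0⟩ : ∃ d : ℂ, ((4 * n + 1 : ℕ) : ℂ) = d ∧ d ≠ 0 := ⟨_, rfl, hd⟩
    rw [hdd]
    field_simp
    ring
  · rw [show F z - (I - 1) / 2 = 1 / (2 * (Real.pi : ℂ)) * S from ?_]
    rw [F, hlog1, hlog2, hSdef]
    field_simp
    linear_combination (Real.pi : ℂ) * Complex.I_mul_I
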